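/- arXiv:0806.4471 — 5 statements merged into one kernel-verified Lean document; each statement's English description precedes it below -/
import Mathlib

section
/- Let p be a prime and n a positive integer. For every integer k with 1 ≤ k ≤ ⌊(n+1)/2⌋, the power p^(n+1) is the sum of p^k successive odd positive numbers, namely p^(n+1) = ∑_{i=0}^{p^k - 1} (p^(n-k+1) - p^k + 1 + 2i), where the first term p^(n-k+1) - p^k + 1 is a positive odd integer. Moreover, p^(n+1) admits no representation as a sum of r ≥ 2 successive even positive numbers. -/
lemma sum_aux_succ_odds (c m : ℕ) :
    ∑ i ∈ Finset.range m, (c + 2 * i) = m * c + m * (m - 1) := by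
  induction m with
  | zero => simp
  | succ m ih =>
      rw [Finset.sum_range_succ, ih]
      cases m with
      | zero => simp
      | succ j => simp only [Nat.succ_sub_one]; ring

/-- For a prime p and positive n, for each 1 ≤ k ≤ ⌊(n+1)/2⌋, p^(n+1) is a
sum of p^k successive odd positive numbers starting at p^(n-k+1) - p^k + 1;
moreover p^(n+1) has no representation as a sum of r ≥ 2 successive even
positive numbers. -/
theorem prime_pow_sums_of_successive_odds (p n : ℕ) (hp : p.Prime) (hn : 1 ≤ n) :
    (∀ k : ℕ, 1 ≤ k → k ≤ (n + 1) / 2 →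
      0 < p ^ (n - k + 1) - p ^ k + 1 ∧
      Odd (p ^ (n - k + 1) - p ^ k + 1) ∧
      p ^ (n + 1) = ∑ i ∈ Finset.range (p ^ k), (p ^ (n - k + 1) - p ^ k + 1 + 2 * i)) ∧
    ¬ ∃ r a : ℕ, 2 ≤ r ∧ 0 < a ∧ Even a ∧
        p ^ (n + 1) = ∑ i ∈ Finset.range r, (a + 2 * i) := by
  have hp2 : 2 ≤ p := hp.two_le
  constructor
  · intro k hk1 hk2
    have hkn : k ≤ n := by omega
    have hkk : k ≤ n - k + 1 := by omega
    have hBA : p ^ k ≤ p ^ (n - k + 1) := Nat.pow_le_pow_right (by omega) hkk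
    have hBpos : 1 ≤ p ^ k := Nat.one_le_pow _ _ (by omega)
    refine ⟨by omega, ?_, ?_⟩
    · -- Odd
      have heven : Even (p ^ (n - k + 1) - p ^ k) := by
        rw [Nat.even_sub hBA]
        rcases Nat.even_or_odd p with he | ho
        · simp only [Nat.even_pow, he, true_and]
          omega
        · simp [Nat.even_pow, Nat.odd_iff.mp ho]
          omega
      exact heven.add_one
    · rw [sum_aux_succ_odds]
      obtain ⟨d, hd⟩ : ∃ d, p ^ (n - k + 1) = p ^ k + d := ⟨_, (Nat.add_sub_cancel' hBA).symm⟩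
      obtain ⟨b, hb⟩ : ∃ b, p ^ k = b + 1 := ⟨p ^ k - 1, by omega⟩
      have hpow : p ^ (n + 1) = p ^ k * p ^ (n - k + 1) := by
        rw [← pow_add]; congr 1; omega
      rw [hpow, hd]
      have : p ^ k + d - p ^ k = d := by omega
      rw [this, hb]
      ring_nf
      simp [Nat.add_sub_cancel]
      ring
  · rintro ⟨r, a, hr, ha, hea, hsum⟩
    rw [sum_aux_succ_odds] at hsum
    obtain ⟨c, hc⟩ := hea
    rcases Nat.even_or_odd p with he | ho
    · -- p = 2 case
      have hp2' : p = 2 := (Nat.Prime.even_iff hp).mp he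
      subst hp2'
      have hsum2 : 2 ^ (n + 1) = r * (a + r - 1) := by
        have : r * (a + r - 1) = r * a + r * (r - 1) := by
          cases r with
          | zero => simp
          | succ j => have : a + (j + 1) - 1 = a + j := by omega
                      rw [this]; simp [Nat.mul_add, Nat.succ_sub_one]
        omega
      have hrdvd : r ∣ 2 ^ (n + 1) := ⟨a + r - 1, hsum2⟩
      obtain ⟨i, _, hi⟩ := (Nat.dvd_prime_pow Nat.prime_two).mp hrdvd
      have hi1 : 1 ≤ i := by
        by_contra h
        interval_cases i <;> omega
      obtain ⟨i', hi'⟩ : ∃ i', i = i' + 1 := ⟨i - 1, by omega⟩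
      have hreven : ∃ s, r = 2 * s := ⟨2 ^ i', by rw [hi, hi', pow_succ]; ring⟩
      obtain ⟨s, hs⟩ := hreven
      have hadv : (a + r - 1) ∣ 2 ^ (n + 1) := Dvd.intro_left _ hsum2.symm
      obtain ⟨j, _, hj⟩ := (Nat.dvd_prime_pow Nat.prime_two).mp hadv
      cases j with
      | zero => simp at hj; omega
      | succ j' =>
          have : (2:ℕ) ^ (j' + 1) = 2 * 2 ^ j' := by rw [pow_succ]; ring
          omega
    · -- p odd case
      have hodd : Odd (p ^ (n + 1)) := ho.pow
      obtain ⟨t, ht⟩ := hodd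
      have hra : r * a = 2 * (r * c) := by rw [hc]; ring
      obtain ⟨u, hu⟩ : ∃ u, r * (r - 1) = 2 * u := by
        rcases Nat.even_or_odd r with ⟨v, hv⟩ | ⟨v, hv⟩
        · exact ⟨v * (r - 1), by rw [hv]; ring⟩
        · refine ⟨r * v, ?_⟩
          have : r - 1 = 2 * v := by omega
          rw [this]; ring
      omega
end

section
/- Every composite odd positive number N is expressible by at least one sum of r ≥ 2 successive odd positive numbers, and admits no representation as a sum of r ≥ 2 successive even positive numbers. Moreover, every even number of the form N = 2^(n+1) with n ≥ 1 also has at least one representation as a sum of r ≥ 2 successive odd positive numbers and none as a sum of r ≥ 2 successive even positive numbers. -/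
lemma sum_succ_eq (r a : ℕ) :
    ∑ i ∈ Finset.range r, (a + 2 * i) = r * a + r * (r - 1) := by
  rw [Finset.sum_add_distrib, Finset.sum_const, Finset.card_range, smul_eq_mul,
    ← Finset.mul_sum]
  have h := Finset.sum_range_id_mul_two r
  omega

lemma even_mul_pred (r : ℕ) : Even (r * (r - 1)) := by
  rcases r with _ | t
  · simp
  · simpa [Nat.mul_comm] using Nat.even_mul_succ_self t

lemma no_even_sum_odd (N : ℕ) (hN : Odd N) :
    ¬ ∃ r a : ℕ, 2 ≤ r ∧ 0 < a ∧ Even a ∧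
      N = ∑ i ∈ Finset.range r, (a + 2 * i) := by
  rintro ⟨r, a, hr, ha, hae, hsum⟩
  rw [sum_succ_eq] at hsum
  have hE : Even N := hsum ▸ (hae.mul_left r).add (even_mul_pred r)
  exact (Nat.not_even_iff_odd.mpr hN) hE

/-- Composite odd numbers, and even numbers of the form 2^(n+1) with n ≥ 1, are
expressible by sums of r ≥ 2 successive odd positive numbers and by no sum of
r ≥ 2 successive even positive numbers. -/
theorem composite_odd_and_two_pow_exclusively_odd_sums :
    (∀ N : ℕ, Odd N → 1 < N → ¬ N.Prime →
      (∃ r a : ℕ, 2 ≤ r ∧ 0 < a ∧ Odd a ∧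
        N = ∑ i ∈ Finset.range r, (a + 2 * i)) ∧
      ¬ ∃ r a : ℕ, 2 ≤ r ∧ 0 < a ∧ Even a ∧
        N = ∑ i ∈ Finset.range r, (a + 2 * i)) ∧
    (∀ n : ℕ, 1 ≤ n →
      (∃ r a : ℕ, 2 ≤ r ∧ 0 < a ∧ Odd a ∧
        2 ^ (n + 1) = ∑ i ∈ Finset.range r, (a + 2 * i)) ∧
      ¬ ∃ r a : ℕ, 2 ≤ r ∧ 0 < a ∧ Even a ∧
        2 ^ (n + 1) = ∑ i ∈ Finset.range r, (a + 2 * i)) := by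
  constructor
  · intro N hodd hN hnp
    refine ⟨?_, no_even_sum_odd N hodd⟩
    obtain ⟨q, hq⟩ := Nat.minFac_dvd N
    set p := N.minFac with hp
    have hpprime : p.Prime := Nat.minFac_prime (by omega)
    have hsq : p * p ≤ N := by
      have h := Nat.minFac_sq_le_self (show 0 < N by omega) hnp
      rwa [sq] at h
    have hp2 : 2 ≤ p := hpprime.two_le
    have hpq : p ≤ q := by
      have : p * p ≤ p * q := by omega
      exact Nat.le_of_mul_le_mul_left this (by omega)
    have hpodd : Odd p := by
      rcases Nat.even_or_odd p with ⟨s, hs⟩ | ho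
      · exfalso; obtain ⟨k, hk⟩ := hodd
        have : p * q = 2 * (s * q) := by rw [hs]; ring
        omega
      · exact ho
    have hqodd : Odd q := by
      rcases Nat.even_or_odd q with ⟨s, hs⟩ | ho
      · exfalso; obtain ⟨k, hk⟩ := hodd
        have : p * q = 2 * (p * s) := by rw [hs]; ring
        omega
      · exact ho
    refine ⟨p, q - p + 1, hp2, by omega, ?_, ?_⟩
    · obtain ⟨s, hs⟩ := hpodd; obtain ⟨t, ht⟩ := hqodd; exact ⟨t - s, by omega⟩
    · rw [sum_succ_eq]
      have h1 : (q - p + 1) + (p - 1) = q := by omega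
      have : p * (q - p + 1) + p * (p - 1) = p * q := by
        calc p * (q - p + 1) + p * (p - 1) = p * ((q - p + 1) + (p - 1)) := by ring
          _ = p * q := by rw [h1]
      omega
  · intro n hn
    have h2 : 2 ≤ 2 ^ n := by
      calc 2 = 2 ^ 1 := rfl
        _ ≤ 2 ^ n := Nat.pow_le_pow_right (by norm_num) hn
    constructor
    · refine ⟨2, 2 ^ n - 1, le_refl 2, by omega, ?_, ?_⟩
      · obtain ⟨k, hk⟩ := (Nat.even_pow.mpr ⟨even_two, by omega⟩ : Even (2 ^ n))
        exact ⟨k - 1, by omega⟩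
      · rw [sum_succ_eq]
        have : 2 ^ (n + 1) = 2 * 2 ^ n := by ring
        omega
    · rintro ⟨r, a, hr, ha, ⟨b, hb⟩, hsum⟩
      rw [sum_succ_eq] at hsum
      have hfac : 2 ^ (n + 1) = r * (a + r - 1) := by
        have h1 : a + r - 1 = a + (r - 1) := by omega
        rw [h1, Nat.mul_add]; omega
      rcases Nat.even_or_odd r with ⟨s, hs⟩ | hro
      · have hodd : Odd (a + r - 1) := ⟨b + s - 1, by omega⟩
        have hdvd : (a + r - 1) ∣ 2 ^ (n + 1) := ⟨r, by rw [hfac]; ring⟩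
        have h1 := Nat.Coprime.eq_one_of_dvd
          ((hodd.coprime_two_right).pow_right _) hdvd
        omega
      · have h3 : 3 ≤ r := by obtain ⟨s, hs⟩ := hro; omega
        have hdvd : r ∣ 2 ^ (n + 1) := ⟨a + r - 1, hfac⟩
        have h1 := Nat.Coprime.eq_one_of_dvd
          ((hro.coprime_two_right).pow_right _) hdvd
        omega
end

section
/- Let p be an odd prime. Then the only representation of N = 4p as a sum of r ≥ 2 successive odd positive numbers is the two-term sum (2p-1) + (2p+1); that is, if 4p = ∑_{i=0}^{r-1} (a + 2i) with r ≥ 2 and a an odd positive integer, then r = 2 and a = 2p - 1. -/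
/-- For an odd prime p, the only representation of 4p as a sum of r ≥ 2
successive odd positive numbers is (2p-1) + (2p+1). -/
theorem four_mul_prime_unique_odd_sum (p : ℕ) (hp : p.Prime) (hodd : Odd p)
    (r a : ℕ) (hr : 2 ≤ r) (ha : 0 < a) (hao : Odd a)
    (h : 4 * p = ∑ i ∈ Finset.range r, (a + 2 * i)) :
    r = 2 ∧ a = 2 * p - 1 := by
  have hsum : ∑ i ∈ Finset.range r, (a + 2 * i) = r * a + r * (r - 1) := by
    rw [Finset.sum_add_distrib, Finset.sum_const, Finset.card_range, ← Finset.mul_sum]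
    have h2 := Finset.sum_range_id_mul_two r
    simp only [smul_eq_mul]
    omega
  have key : 4 * p = r * (a + r - 1) := by
    have h1 : a + r - 1 = a + (r - 1) := by omega
    rw [h1, Nat.mul_add]
    omega
  set m := a + r - 1 with hm
  obtain ⟨x, hx⟩ := hao
  have hp3 : 3 ≤ p := by
    have := hp.two_le
    rcases hodd with ⟨k, hk⟩
    omega
  rcases Nat.even_or_odd r with hre | hro
  · -- r even, hence m even
    obtain ⟨s, hs⟩ := hre
    have hme : ∃ t, m = 2 * t := ⟨x + s, by omega⟩
    obtain ⟨t, ht⟩ := hme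
    have hst : s * t = p := by
      have : 4 * p = (s + s) * (2 * t) := by rw [← hs, ← ht]; exact key
      nlinarith
    rcases (Nat.Prime.eq_one_or_self_of_dvd hp s ⟨t, hst.symm⟩) with h1 | h1
    · subst h1
      simp at hst
      constructor <;> omega
    · exfalso
      rw [h1] at hst
      have ht1 : t = 1 := Nat.eq_of_mul_eq_mul_left (by omega) (hst.trans (mul_one p).symm)
      omega
  · -- r odd, then m odd, contradicting r*m = 4p even
    exfalso
    obtain ⟨y, hy⟩ := hro
    have hmo : Odd m := ⟨x + y, by omega⟩
    have hro' : Odd r := ⟨y, hy⟩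
    have : Odd (r * m) := hro'.mul hmo
    obtain ⟨k, hk⟩ := this
    omega
end

section
/- Let m and n be positive integers with 2m + 1 < 2^(n+1), and let N = 2^n·(2m+1). Then N has at least one representation as a sum of r ≥ 2 consecutive positive integers, and every representation of N as a sum of r ≥ 2 consecutive positive integers has an odd number of terms (r is odd). -/
lemma sum_consec_double (r a : ℕ) :
    2 * ∑ i ∈ Finset.range r, (a + i) = r * (2 * a + r - 1) := by
  induction r with
  | zero => simp
  | succ k ih =>
    rw [Finset.sum_range_succ, Nat.mul_add, ih]
    rcases k with _ | k
    · simp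
    · have : 2 * a + (k + 1) - 1 = 2 * a + k := by omega
      have h2 : 2 * a + (k + 1 + 1) - 1 = 2 * a + k + 1 := by omega
      rw [this, h2]; ring

/-- If 2m+1 < 2^(n+1) with m, n ≥ 1, then N = 2^n·(2m+1) is a sum of r ≥ 2
consecutive positive integers, and every such representation of N has an odd
number of terms. -/
theorem small_odd_part_exclusively_odd_length_sums (m n : ℕ) (hm : 0 < m) (hn : 0 < n)
    (h : 2 * m + 1 < 2 ^ (n + 1)) :
    (∃ r a : ℕ, 2 ≤ r ∧ 0 < a ∧
      2 ^ n * (2 * m + 1) = ∑ i ∈ Finset.range r, (a + i)) ∧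
    (∀ r a : ℕ, 2 ≤ r → 0 < a →
      2 ^ n * (2 * m + 1) = ∑ i ∈ Finset.range r, (a + i) → Odd r) := by
  have hpow : 2 * m + 1 < 2 * 2 ^ n := by
    rw [pow_succ] at h; omega
  have hmlt : m < 2 ^ n := by omega
  constructor
  · refine ⟨2 * m + 1, 2 ^ n - m, by omega, by omega, ?_⟩
    have key := sum_consec_double (2 * m + 1) (2 ^ n - m)
    have : (2 * m + 1) * (2 * (2 ^ n - m) + (2 * m + 1) - 1)
        = 2 * (2 ^ n * (2 * m + 1)) := by
      have : 2 * (2 ^ n - m) + (2 * m + 1) - 1 = 2 * 2 ^ n := by omega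
      rw [this]; ring
    omega
  · intro r a hr ha hsum
    by_contra hodd
    have heven : Even r := Nat.not_odd_iff_even.mp hodd
    have key := sum_consec_double r a
    rw [← hsum] at key
    have key2 : 2 ^ (n + 1) * (2 * m + 1) = r * (2 * a + r - 1) := by
      rw [pow_succ, mul_comm (2 ^ n) 2, mul_assoc]; omega
    -- 2a + r - 1 is odd
    have hodd2 : Odd (2 * a + r - 1) := by
      obtain ⟨k, hk⟩ := heven
      refine ⟨a + k - 1, by omega⟩
    have hdvd : 2 ^ (n + 1) ∣ r := by
      have h1 : 2 ^ (n + 1) ∣ r * (2 * a + r - 1) := ⟨2 * m + 1, key2.symm⟩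
      exact (Nat.Coprime.dvd_of_dvd_mul_right
        (Nat.Coprime.pow_left _ (Nat.coprime_two_left.mpr hodd2)) h1)
    have hrge : 2 ^ (n + 1) ≤ r := Nat.le_of_dvd (by omega) hdvd
    have h2 : 2 * m + 1 < 2 * a + r - 1 := by omega
    have : 2 ^ (n + 1) * (2 * m + 1) < r * (2 * a + r - 1) :=
      Nat.mul_lt_mul_of_le_of_lt hrge h2 (by omega)
    omega
end

section
/- Let m and n be positive integers such that 2m + 1 is composite and 2m + 1 > 2^n, and let N = 2^(n-1)·(2m+1). Then N has at least one representation as a sum of an odd number r ≥ 3 of consecutive positive integers, and at least one representation as a sum of an even number r ≥ 2 of consecutive positive integers. -/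
lemma two_mul_sum_consec (a r : ℕ) :
    2 * ∑ i ∈ Finset.range r, (a + i) = 2 * r * a + r * (r - 1) := by
  rw [Finset.sum_add_distrib, Finset.sum_const, Finset.card_range, smul_eq_mul,
    Nat.mul_add, ← Finset.sum_range_id_mul_two]
  ring

/-- If 2m+1 is composite and exceeds 2^n (m, n ≥ 1), then N = 2^(n-1)·(2m+1)
has at least one representation as a sum of an odd number r ≥ 3 of consecutive
positive integers and at least one representation as a sum of an even number
r ≥ 2 of consecutive positive integers. -/
theorem large_composite_odd_part_both_length_sums (m n : ℕ) (hm : 0 < m) (hn : 0 < n)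
    (hcomp : ¬ (2 * m + 1).Prime) (hgt : 2 ^ n < 2 * m + 1) :
    (∃ r a : ℕ, 3 ≤ r ∧ Odd r ∧ 0 < a ∧
      2 ^ (n - 1) * (2 * m + 1) = ∑ i ∈ Finset.range r, (a + i)) ∧
    (∃ r a : ℕ, 2 ≤ r ∧ Even r ∧ 0 < a ∧
      2 ^ (n - 1) * (2 * m + 1) = ∑ i ∈ Finset.range r, (a + i)) := by
  have hs1 : 0 < 2 ^ (n - 1) := Nat.pow_pos (by norm_num)
  have hpow : 2 ^ n = 2 * 2 ^ (n - 1) := by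
    rw [← pow_succ']
    congr 1
    omega
  constructor
  · -- odd length: r = minFac (2m+1)
    set p := (2 * m + 1).minFac with hpdef
    have hp : p.Prime := Nat.minFac_prime (by omega)
    have hpd : p ∣ 2 * m + 1 := Nat.minFac_dvd _
    have hpodd : p ≠ 2 := by
      intro h
      have := hpd
      rw [h] at this
      omega
    have hp3 : 3 ≤ p := by
      have := hp.two_le
      omega
    have hpo : Odd p := hp.odd_of_ne_two hpodd
    obtain ⟨k, hk⟩ := hpo
    set q := (2 * m + 1) / p with hqdef
    have hq : p * q = 2 * m + 1 := Nat.mul_div_cancel' hpd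
    have hsq : p * p ≤ 2 * m + 1 := by
      have := Nat.minFac_sq_le_self (by omega : 0 < 2 * m + 1) hcomp
      simpa [pow_two] using this
    have hpq : p ≤ q := Nat.le_of_mul_le_mul_left (by omega) hp.pos
    have hqk : k + 1 ≤ 2 ^ (n - 1) * q := by
      have : k + 1 ≤ q := by omega
      calc k + 1 ≤ q := this
        _ ≤ 2 ^ (n - 1) * q := Nat.le_mul_of_pos_left _ hs1
    refine ⟨p, 2 ^ (n - 1) * q - k, hp3, ⟨k, hk⟩, by omega, ?_⟩
    set a := 2 ^ (n - 1) * q - k with hadef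
    have ha : a + k = 2 ^ (n - 1) * q := by omega
    have h2 : 2 * (2 ^ (n - 1) * (2 * m + 1)) =
        2 * ∑ i ∈ Finset.range p, (a + i) := by
      rw [two_mul_sum_consec, ← hq]
      have hp1 : p - 1 = 2 * k := by omega
      rw [hp1]
      nlinarith [ha]
    omega
  · -- even length: r = 2^n
    have hle : 2 ^ (n - 1) ≤ m := by omega
    refine ⟨2 ^ n, m + 1 - 2 ^ (n - 1), ?_, ?_, by omega, ?_⟩
    · calc 2 = 2 ^ 1 := rfl
        _ ≤ 2 ^ n := Nat.pow_le_pow_right (by norm_num) hn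
    · exact ⟨2 ^ (n - 1), by omega⟩
    · set a := m + 1 - 2 ^ (n - 1) with hadef
      have ha : a + 2 ^ (n - 1) = m + 1 := by omega
      have h2 : 2 * (2 ^ (n - 1) * (2 * m + 1)) =
          2 * ∑ i ∈ Finset.range (2 ^ n), (a + i) := by
        rw [two_mul_sum_consec, hpow]
        have key : 2 * a + (2 * 2 ^ (n - 1) - 1) = 2 * m + 1 := by omega
        rw [← key]
        ring
      omega
end
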